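/- Let N = Z^5 with standard basis e_1, …, e_5 and set e_6 = e_1 + e_2 + 2e_3 - e_4 - e_5. Then the cone σ spanned by e_1, …, e_6 in N ⊗ R is a 5-dimensional cone, the relation e_1 + e_2 + 2e_3 = e_4 + e_5 + e_6 holds, and the two subdivisions of σ obtained by coning over the faces containing {e_1, e_2, e_3} (respectively {e_4, e_5, e_6}) give two different fans with the same support σ. -/

import Mathlib

private lemma aux_mem_cone (j : Fin 6) (v : Fin 6 → (Fin 5 → ℝ)) (d : Fin 6 → ℝ)
    (hd : ∀ i, 0 ≤ d i) (hdj : d j = 0) :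
    ∑ i, d i • v i ∈ Submodule.span NNReal (v '' (Set.univ \ {j})) := by
  apply Submodule.sum_mem
  intro i _
  by_cases h : i = j
  · subst h; rw [hdj, zero_smul]; exact Submodule.zero_mem _
  · have hv : v i ∈ v '' (Set.univ \ {j}) := ⟨i, ⟨trivial, h⟩, rfl⟩
    have := Submodule.smul_mem _ (⟨d i, hd i⟩ : NNReal) (Submodule.subset_span hv)
    exact this

private lemma aux_coeff (v : Fin 6 → (Fin 5 → ℝ)) {x : Fin 5 → ℝ}
    (hx : x ∈ Submodule.span NNReal (Set.range v)) :
    ∃ c : Fin 6 → ℝ, (∀ i, 0 ≤ c i) ∧ ∑ i, c i • v i = x := by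
  rw [Submodule.mem_span_range_iff_exists_fun] at hx
  obtain ⟨c, hc⟩ := hx
  exact ⟨fun i => c i, fun i => (c i).coe_nonneg, by simpa [NNReal.smul_def] using hc⟩

/-- The "half space" `{y | y 0 ≤ y 1}` as an `ℝ≥0`-submodule. -/
private def auxP : Submodule NNReal (Fin 5 → ℝ) where
  carrier := {y | y 0 ≤ y 1}
  add_mem' := by
    intro a b ha hb
    simpa using add_le_add (ha : a 0 ≤ a 1) (hb : b 0 ≤ b 1)
  zero_mem' := by
    show (0 : Fin 5 → ℝ) 0 ≤ (0 : Fin 5 → ℝ) 1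
    exact le_refl _
  smul_mem' := by
    intro r y hy
    simp only [Set.mem_setOf_eq, Pi.smul_apply, NNReal.smul_def, smul_eq_mul]
    exact mul_le_mul_of_nonneg_left hy r.coe_nonneg

private lemma mem_auxP {y : Fin 5 → ℝ} : y ∈ auxP ↔ y 0 ≤ y 1 := Iff.rfl

/-- Let `N = ℤ⁵` with basis `e₁,…,e₅` and `e₆ = e₁ + e₂ + 2e₃ - e₄ - e₅`.  The cone `σ`
spanned by `e₁,…,e₆` is 5-dimensional (its linear span is everything), the relation
`e₁ + e₂ + 2e₃ = e₄ + e₅ + e₆` holds, and the two subdivisions of `σ` obtained by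
coning over the faces containing `{e₁,e₂,e₃}` (resp. `{e₄,e₅,e₆}`) — i.e. with maximal
cones spanned by all `eᵢ` except one of `e₄,e₅,e₆` (resp. one of `e₁,e₂,e₃`) — give two
different fans with the same support `σ`. -/
theorem toric_flip_two_subdivisions_same_support :
    let v : Fin 6 → (Fin 5 → ℝ) := fun j =>
      if h : (j : ℕ) < 5 then Pi.single ⟨j, h⟩ (1 : ℝ)
      else ![1, 1, 2, -1, -1]
    let cone : Fin 6 → Submodule NNReal (Fin 5 → ℝ) := fun j =>
      Submodule.span NNReal (v '' (Set.univ \ {j}))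
    let σ : Submodule NNReal (Fin 5 → ℝ) := Submodule.span NNReal (Set.range v)
    (v 0 + v 1 + (2 : ℝ) • v 2 = v 3 + v 4 + v 5) ∧
    (Submodule.span ℝ (Set.range v) = ⊤) ∧
    ((cone 3 : Set (Fin 5 → ℝ)) ∪ (cone 4 : Set (Fin 5 → ℝ)) ∪ (cone 5 : Set (Fin 5 → ℝ))
        = (σ : Set (Fin 5 → ℝ))) ∧
    ((cone 0 : Set (Fin 5 → ℝ)) ∪ (cone 1 : Set (Fin 5 → ℝ)) ∪ (cone 2 : Set (Fin 5 → ℝ))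
        = (σ : Set (Fin 5 → ℝ))) ∧
    ({cone 3, cone 4, cone 5} : Set (Submodule NNReal (Fin 5 → ℝ))) ≠
      {cone 0, cone 1, cone 2} := by
  intro v cone σ
  have hv : ∀ j : Fin 6, (j : ℕ) < 5 → ∀ h, v j = Pi.single (⟨(j : ℕ), h⟩ : Fin 5) 1 := by
    intro j hj h; simp only [v, dif_pos hj]
  have h0 : v 0 = Pi.single 0 1 := hv 0 (by decide) (by decide)
  have h1 : v 1 = Pi.single 1 1 := hv 1 (by decide) (by decide)
  have h2 : v 2 = Pi.single 2 1 := hv 2 (by decide) (by decide)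
  have h3 : v 3 = Pi.single 3 1 := hv 3 (by decide) (by decide)
  have h4 : v 4 = Pi.single 4 1 := hv 4 (by decide) (by decide)
  have h5 : v 5 = ![1, 1, 2, -1, -1] := by
    simp only [v]; rw [dif_neg (by decide)]
  -- the basic relation
  have hrel : v 0 + v 1 + (2 : ℝ) • v 2 = v 3 + v 4 + v 5 := by
    rw [h0, h1, h2, h3, h4, h5]
    funext i
    fin_cases i <;> simp (config := { decide := true }) [Pi.single_apply]
  -- each cone is contained in σ
  have hconeσ : ∀ j, (cone j : Set (Fin 5 → ℝ)) ⊆ (σ : Set (Fin 5 → ℝ)) := by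
    intro j x hx
    exact Submodule.span_mono (by rintro _ ⟨i, -, rfl⟩; exact ⟨i, rfl⟩) hx
  refine ⟨hrel, ?_, ?_, ?_, ?_⟩
  -- full-dimensionality
  · rw [eq_top_iff]
    rintro x -
    rw [pi_eq_sum_univ x]
    refine Submodule.sum_mem _ fun i _ => Submodule.smul_mem _ _ (Submodule.subset_span ?_)
    have hfun : (fun j => if i = j then (1 : ℝ) else 0) = Pi.single i 1 := by
      funext j; simp [Pi.single_apply, eq_comm]
    rw [hfun]
    fin_cases i
    exacts [⟨0, h0⟩, ⟨1, h1⟩, ⟨2, h2⟩, ⟨3, h3⟩, ⟨4, h4⟩]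
  -- first subdivision has support σ
  · apply Set.Subset.antisymm
    · rintro x ((hx | hx) | hx)
      · exact hconeσ 3 hx
      · exact hconeσ 4 hx
      · exact hconeσ 5 hx
    · intro x hx
      obtain ⟨c, hc, hsum⟩ := aux_coeff v hx
      have hm0 : 0 ≤ min (c 3) (min (c 4) (c 5)) := le_min (hc 3) (le_min (hc 4) (hc 5))
      have hm3 : min (c 3) (min (c 4) (c 5)) ≤ c 3 := min_le_left _ _
      have hm4 : min (c 3) (min (c 4) (c 5)) ≤ c 4 :=
        le_trans (min_le_right _ _) (min_le_left _ _)
      have hm5 : min (c 3) (min (c 4) (c 5)) ≤ c 5 :=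
        le_trans (min_le_right _ _) (min_le_right _ _)
      set m : ℝ := min (c 3) (min (c 4) (c 5)) with hm
      set d : Fin 6 → ℝ := ![c 0 + m, c 1 + m, c 2 + 2 * m, c 3 - m, c 4 - m, c 5 - m]
        with hd
      have hd0 : d 0 = c 0 + m := rfl
      have hd1 : d 1 = c 1 + m := rfl
      have hd2 : d 2 = c 2 + 2 * m := rfl
      have hd3 : d 3 = c 3 - m := rfl
      have hd4 : d 4 = c 4 - m := rfl
      have hd5 : d 5 = c 5 - m := rfl
      have hdnn : ∀ i, 0 ≤ d i := by
        intro i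
        fin_cases i
        · show (0:ℝ) ≤ c 0 + m; linarith [hc 0]
        · show (0:ℝ) ≤ c 1 + m; linarith [hc 1]
        · show (0:ℝ) ≤ c 2 + 2 * m; linarith [hc 2]
        · show (0:ℝ) ≤ c 3 - m; linarith
        · show (0:ℝ) ≤ c 4 - m; linarith
        · show (0:ℝ) ≤ c 5 - m; linarith
      have hsum' : ∑ i, d i • v i = x := by
        rw [← hsum]
        rw [Fin.sum_univ_six, Fin.sum_univ_six, hd0, hd1, hd2, hd3, hd4, hd5]
        linear_combination (norm := module) m • hrel
      rcases le_total (c 3) (min (c 4) (c 5)) with h | h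
      · left; left
        have hz : d 3 = 0 := by rw [hd3, hm, min_eq_left h]; ring
        exact hsum' ▸ aux_mem_cone 3 v d hdnn hz
      · rcases le_total (c 4) (c 5) with h' | h'
        · left; right
          have hz : d 4 = 0 := by
            rw [hd4, hm, min_eq_right h, min_eq_left h']; ring
          exact hsum' ▸ aux_mem_cone 4 v d hdnn hz
        · right
          have hz : d 5 = 0 := by
            rw [hd5, hm, min_eq_right h, min_eq_right h']; ring
          exact hsum' ▸ aux_mem_cone 5 v d hdnn hz
  -- second subdivision has support σ
  · apply Set.Subset.antisymm
    · rintro x ((hx | hx) | hx)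
      · exact hconeσ 0 hx
      · exact hconeσ 1 hx
      · exact hconeσ 2 hx
    · intro x hx
      obtain ⟨c, hc, hsum⟩ := aux_coeff v hx
      have hm0 : 0 ≤ min (c 0) (min (c 1) (c 2 / 2)) :=
        le_min (hc 0) (le_min (hc 1) (by linarith [hc 2]))
      have hm3 : min (c 0) (min (c 1) (c 2 / 2)) ≤ c 0 := min_le_left _ _
      have hm4 : min (c 0) (min (c 1) (c 2 / 2)) ≤ c 1 :=
        le_trans (min_le_right _ _) (min_le_left _ _)
      have hm5 : min (c 0) (min (c 1) (c 2 / 2)) ≤ c 2 / 2 :=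
        le_trans (min_le_right _ _) (min_le_right _ _)
      set m : ℝ := min (c 0) (min (c 1) (c 2 / 2)) with hm
      set d : Fin 6 → ℝ := ![c 0 - m, c 1 - m, c 2 - 2 * m, c 3 + m, c 4 + m, c 5 + m]
        with hd
      have hd0 : d 0 = c 0 - m := rfl
      have hd1 : d 1 = c 1 - m := rfl
      have hd2 : d 2 = c 2 - 2 * m := rfl
      have hd3 : d 3 = c 3 + m := rfl
      have hd4 : d 4 = c 4 + m := rfl
      have hd5 : d 5 = c 5 + m := rfl
      have hdnn : ∀ i, 0 ≤ d i := by
        intro i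
        fin_cases i
        · show (0:ℝ) ≤ c 0 - m; linarith
        · show (0:ℝ) ≤ c 1 - m; linarith
        · show (0:ℝ) ≤ c 2 - 2 * m; linarith
        · show (0:ℝ) ≤ c 3 + m; linarith [hc 3]
        · show (0:ℝ) ≤ c 4 + m; linarith [hc 4]
        · show (0:ℝ) ≤ c 5 + m; linarith [hc 5]
      have hsum' : ∑ i, d i • v i = x := by
        rw [← hsum]
        rw [Fin.sum_univ_six, Fin.sum_univ_six, hd0, hd1, hd2, hd3, hd4, hd5]
        linear_combination (norm := module) (-m) • hrel
      rcases le_total (c 0) (min (c 1) (c 2 / 2)) with h | h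
      · left; left
        have hz : d 0 = 0 := by rw [hd0, hm, min_eq_left h]; ring
        exact hsum' ▸ aux_mem_cone 0 v d hdnn hz
      · rcases le_total (c 1) (c 2 / 2) with h' | h'
        · left; right
          have hz : d 1 = 0 := by
            rw [hd1, hm, min_eq_right h, min_eq_left h']; ring
          exact hsum' ▸ aux_mem_cone 1 v d hdnn hz
        · right
          have hz : d 2 = 0 := by
            rw [hd2, hm, min_eq_right h, min_eq_right h']
            field_simp
            ring
          exact hsum' ▸ aux_mem_cone 2 v d hdnn hz
  -- the two subdivisions are different
  · intro heq
    -- `cone 0 ≤ auxP`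
    have hP : cone 0 ≤ auxP := by
      apply Submodule.span_le.2
      rintro _ ⟨i, ⟨-, hi⟩, rfl⟩
      have hi' : i ≠ 0 := hi
      rw [SetLike.mem_coe, mem_auxP]
      fin_cases i
      · exact absurd rfl hi'
      · show v 1 0 ≤ v 1 1
        rw [h1]; simp (config := { decide := true }) [Pi.single_apply]
      · show v 2 0 ≤ v 2 1
        rw [h2]; simp (config := { decide := true }) [Pi.single_apply]
      · show v 3 0 ≤ v 3 1
        rw [h3]; simp (config := { decide := true }) [Pi.single_apply]
      · show v 4 0 ≤ v 4 1
        rw [h4]; simp (config := { decide := true }) [Pi.single_apply]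
      · show v 5 0 ≤ v 5 1
        rw [h5]; norm_num
    have hv0P : v 0 ∉ auxP := by
      intro hmem
      have h' : (v 0) 0 ≤ (v 0) 1 := mem_auxP.1 hmem
      rw [h0] at h'
      simp (config := { decide := true }) [Pi.single_apply] at h'
      linarith
    have hv0 : ∀ j : Fin 6, j ≠ 0 → v 0 ∈ cone j := fun j hj =>
      Submodule.subset_span ⟨0, ⟨trivial, fun h => hj (by rw [h])⟩, rfl⟩
    have hmem : cone 0 ∈ ({cone 3, cone 4, cone 5} : Set (Submodule NNReal (Fin 5 → ℝ))) := by
      rw [heq]; exact Set.mem_insert _ _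
    rcases hmem with h | h | h
    · exact hv0P (hP (h ▸ hv0 3 (by decide)))
    · exact hv0P (hP (h ▸ hv0 4 (by decide)))
    · exact hv0P (hP (h ▸ hv0 5 (by decide)))
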